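/- Let A, B₁ and B₂ be elements of a Banach algebra. Then the nested (multirate) leap-frog scheme Δ̂(h) = exp((h/2)B₂)·( exp((h/(2M))B₁)·exp((h/M)A)·exp((h/(2M))B₁) )^M·exp((h/2)B₂) is second-order accurate uniformly in the number of inner steps: there exists a constant C (depending only on A, B₁, B₂) such that for all 0 < h ≤ 1 and all positive integers M, ‖Δ̂(h) − exp(h(A+B₁+B₂))‖ ≤ C·h³. -/

import Mathlib

open NormedSpace Nat

section Aux

variable {𝒜 : Type*} [NormedRing 𝒜] [NormedAlgebra ℝ 𝒜] [CompleteSpace 𝒜]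

lemma nlf_prod_le (x y : 𝒜) {p q : ℝ} (hx : ‖x‖ ≤ p) (hy : ‖y‖ ≤ q) (hp : 0 ≤ p) :
    ‖x * y‖ ≤ p * q :=
  (norm_mul_le x y).trans (mul_le_mul hx hy (norm_nonneg y) hp)

variable [NormOneClass 𝒜]

lemma nlf_norm_pow_le (x : 𝒜) (n : ℕ) : ‖x ^ n‖ ≤ ‖x‖ ^ n := by
  cases n with
  | zero => simp
  | succ n => exact norm_pow_le' x n.succ_pos

lemma nlf_norm_exp_le (x : 𝒜) : ‖exp x‖ ≤ Real.exp ‖x‖ := by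
  rw [exp_eq_tsum ℝ]
  refine (norm_tsum_le_tsum_norm (norm_expSeries_summable' x)).trans ?_
  have hE : Real.exp ‖x‖ = ∑' n : ℕ, ‖x‖ ^ n / n.factorial := by
    rw [Real.exp_eq_exp_ℝ, exp_eq_tsum_div]
  rw [hE]
  refine Summable.tsum_le_tsum (fun n => ?_) (norm_expSeries_summable' x)
    (Real.summable_pow_div_factorial ‖x‖)
  rw [norm_smul, Real.norm_eq_abs, abs_of_nonneg (by positivity), div_eq_inv_mul]
  exact mul_le_mul_of_nonneg_left (nlf_norm_pow_le x n) (by positivity)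

lemma nlf_tail_bound (x : 𝒜) :
    ‖exp x - (1 + x + (2:ℝ)⁻¹ • (x * x))‖ ≤ ‖x‖ ^ 3 * Real.exp ‖x‖ := by
  have hs : Summable (fun n : ℕ => ((n.factorial:ℝ))⁻¹ • x ^ n) := expSeries_summable' x
  have hsplit := Summable.sum_add_tsum_nat_add 3 hs
  have hsum : ∑ i ∈ Finset.range 3, ((i.factorial:ℝ))⁻¹ • x ^ i = 1 + x + (2:ℝ)⁻¹ • (x * x) := by
    rw [Finset.sum_range_succ, Finset.sum_range_succ, Finset.sum_range_one]
    norm_num [Nat.factorial, pow_two]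
  simp only [exp_eq_tsum ℝ]
  rw [← hsplit, hsum, add_sub_cancel_left]
  have hsn : Summable fun n : ℕ => ‖(((n+3).factorial:ℝ))⁻¹ • x ^ (n + 3)‖ :=
    (norm_expSeries_summable' x).comp_injective (add_left_injective 3)
  refine (norm_tsum_le_tsum_norm hsn).trans ?_
  have hE : Real.exp ‖x‖ = ∑' n : ℕ, ‖x‖ ^ n / n.factorial := by
    rw [Real.exp_eq_exp_ℝ, exp_eq_tsum_div]
  rw [hE, ← tsum_mul_left]
  refine Summable.tsum_le_tsum (fun n => ?_) hsn
    ((Real.summable_pow_div_factorial ‖x‖).mul_left _)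
  rw [norm_smul, Real.norm_eq_abs, abs_of_nonneg (by positivity)]
  have h1 : ‖x ^ (n + 3)‖ ≤ ‖x‖ ^ 3 * ‖x‖ ^ n := by
    refine (norm_pow_le' x (by omega)).trans ?_
    rw [← pow_add]
    rw [add_comm 3 n]
  have h2 : (((n+3).factorial:ℝ))⁻¹ ≤ ((n.factorial:ℝ))⁻¹ := by
    apply inv_anti₀
    · positivity
    · exact_mod_cast Nat.factorial_le (by omega)
  calc (((n+3).factorial:ℝ))⁻¹ * ‖x ^ (n + 3)‖
      ≤ ((n.factorial:ℝ))⁻¹ * (‖x‖ ^ 3 * ‖x‖ ^ n) := by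
        apply mul_le_mul h2 h1 (norm_nonneg _) (by positivity)
    _ = ‖x‖ ^ 3 * (‖x‖ ^ n / n.factorial) := by ring

lemma nlf_poly_identity (a b : 𝒜) :
    (1 + b + (2:ℝ)⁻¹ • (b*b)) * (1 + a + (2:ℝ)⁻¹ • (a*a)) * (1 + b + (2:ℝ)⁻¹ • (b*b))
      - (1 + (a + b + b) + (2:ℝ)⁻¹ • ((a + b + b)*(a + b + b))) =
    (2:ℝ)⁻¹ • (a * (b*b)) + (2:ℝ)⁻¹ • ((a*a) * b) + (4:ℝ)⁻¹ • ((a*a) * (b*b))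
      + (2:ℝ)⁻¹ • (b*(b*b)) + b * a * b + (2:ℝ)⁻¹ • (b * a * (b*b))
      + (2:ℝ)⁻¹ • (b * (a*a)) + (2:ℝ)⁻¹ • (b * (a*a) * b) + (4:ℝ)⁻¹ • (b * (a*a) * (b*b))
      + (2:ℝ)⁻¹ • (b*(b*b)) + (4:ℝ)⁻¹ • ((b*b)*(b*b))
      + (2:ℝ)⁻¹ • ((b*b) * a) + (2:ℝ)⁻¹ • ((b*b) * a * b) + (4:ℝ)⁻¹ • ((b*b) * a * (b*b))
      + (4:ℝ)⁻¹ • ((b*b) * (a*a)) + (4:ℝ)⁻¹ • ((b*b) * (a*a) * b)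
      + (8:ℝ)⁻¹ • ((b*b) * (a*a) * (b*b)) := by
  simp only [mul_add, add_mul, smul_mul_assoc, mul_smul_comm, smul_smul, smul_add,
    mul_assoc, mul_one, one_mul]
  module

set_option maxHeartbeats 1000000 in
lemma nlf_poly_bound (a b : 𝒜) {s r : ℝ} (ha : ‖a‖ ≤ s) (hb : ‖b‖ ≤ s)
    (hs0 : 0 ≤ s) (hsr : s ≤ r) (hr0 : 0 ≤ r) (hr1 : 1 ≤ r) :
    ‖(1 + b + (2:ℝ)⁻¹ • (b*b)) * (1 + a + (2:ℝ)⁻¹ • (a*a)) * (1 + b + (2:ℝ)⁻¹ • (b*b))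
      - (1 + (a + b + b) + (2:ℝ)⁻¹ • ((a + b + b)*(a + b + b)))‖ ≤ 17 * (s^3 * r^3) := by
  rw [nlf_poly_identity a b]
  have haa : ‖a*a‖ ≤ s*s := nlf_prod_le _ _ ha ha hs0
  have hbb : ‖b*b‖ ≤ s*s := nlf_prod_le _ _ hb hb hs0
  have hsss : 0 ≤ s*s := by positivity
  set E : ℝ := s^3 * r^3 with hEdef
  have hE0 : 0 ≤ E := by positivity
  have bnd : ∀ (c : ℝ) (m : 𝒜), 0 ≤ c → c ≤ 1 → ‖m‖ ≤ E → ‖c • m‖ ≤ E := by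
    intro c m h0 h1 hm
    rw [norm_smul, Real.norm_eq_abs, abs_of_nonneg h0]
    nlinarith [norm_nonneg m]
  -- degree bounds
  have hss_rr : s*s ≤ r*r := mul_le_mul hsr hsr hs0 hr0
  have hs3r3 : s*(s*s) ≤ r*(r*r) := mul_le_mul hsr hss_rr (by positivity) hr0
  have hs3nn : 0 ≤ s*(s*s) := by positivity
  have hr3ge1 : 1 ≤ r*(r*r) := by nlinarith
  have hrr3 : r ≤ r*(r*r) := by nlinarith
  have hr2r3 : r*r ≤ r*(r*r) := by nlinarith
  have d3 : s * (s*s) ≤ E := by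
    simp only [hEdef]; nlinarith [hs3nn, hr3ge1]
  have d3' : (s*s) * s ≤ E := by
    simp only [hEdef]; nlinarith [hs3nn, hr3ge1]
  have d4 : (s*s) * (s*s) ≤ E := by
    simp only [hEdef]; nlinarith [hs3nn, hrr3, hsr, hs0]
  have d4' : (s * (s*s)) * s ≤ E := by
    simp only [hEdef]; nlinarith [hs3nn, hrr3, hsr, hs0]
  have d4'' : ((s*s) * s) * s ≤ E := by
    simp only [hEdef]; nlinarith [hs3nn, hrr3, hsr, hs0]
  have d5 : (s * (s*s)) * (s*s) ≤ E := by
    simp only [hEdef]; nlinarith [hs3nn, hr2r3, hss_rr, hs0]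
  have d5' : ((s*s) * s) * (s*s) ≤ E := by
    simp only [hEdef]; nlinarith [hs3nn, hr2r3, hss_rr, hs0]
  have d5'' : ((s*s) * (s*s)) * s ≤ E := by
    simp only [hEdef]; nlinarith [hs3nn, hr2r3, hss_rr, hs0]
  have d6 : ((s*s) * (s*s)) * (s*s) ≤ E := by
    simp only [hEdef]; nlinarith [hs3nn, hs3r3]
  have h01 : (0:ℝ) ≤ (2:ℝ)⁻¹ := by norm_num
  have h11 : ((2:ℝ)⁻¹ : ℝ) ≤ 1 := by norm_num
  have h02 : (0:ℝ) ≤ (4:ℝ)⁻¹ := by norm_num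
  have h12 : ((4:ℝ)⁻¹ : ℝ) ≤ 1 := by norm_num
  have h03 : (0:ℝ) ≤ (8:ℝ)⁻¹ := by norm_num
  have h13 : ((8:ℝ)⁻¹ : ℝ) ≤ 1 := by norm_num
  have t01 : ‖(2:ℝ)⁻¹ • (a * (b*b))‖ ≤ E :=
    bnd _ _ h01 h11 ((nlf_prod_le _ _ ha hbb hs0).trans d3)
  have t02 : ‖(2:ℝ)⁻¹ • ((a*a) * b)‖ ≤ E :=
    bnd _ _ h01 h11 ((nlf_prod_le _ _ haa hb hsss).trans d3')
  have t03 : ‖(4:ℝ)⁻¹ • ((a*a) * (b*b))‖ ≤ E :=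
    bnd _ _ h02 h12 ((nlf_prod_le _ _ haa hbb hsss).trans d4)
  have t04 : ‖(2:ℝ)⁻¹ • (b*(b*b))‖ ≤ E :=
    bnd _ _ h01 h11 ((nlf_prod_le _ _ hb hbb hs0).trans d3)
  have t05 : ‖b * a * b‖ ≤ E :=
    (nlf_prod_le _ _ (nlf_prod_le _ _ hb ha hs0) hb hsss).trans d3'
  have t06 : ‖(2:ℝ)⁻¹ • (b * a * (b*b))‖ ≤ E :=
    bnd _ _ h01 h11 ((nlf_prod_le _ _ (nlf_prod_le _ _ hb ha hs0) hbb hsss).trans d4)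
  have t07 : ‖(2:ℝ)⁻¹ • (b * (a*a))‖ ≤ E :=
    bnd _ _ h01 h11 ((nlf_prod_le _ _ hb haa hs0).trans d3)
  have t08 : ‖(2:ℝ)⁻¹ • (b * (a*a) * b)‖ ≤ E :=
    bnd _ _ h01 h11 ((nlf_prod_le _ _ (nlf_prod_le _ _ hb haa hs0) hb (by positivity)).trans d4')
  have t09 : ‖(4:ℝ)⁻¹ • (b * (a*a) * (b*b))‖ ≤ E :=
    bnd _ _ h02 h12 ((nlf_prod_le _ _ (nlf_prod_le _ _ hb haa hs0) hbb (by positivity)).trans d5)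
  have t10 : ‖(4:ℝ)⁻¹ • ((b*b)*(b*b))‖ ≤ E :=
    bnd _ _ h02 h12 ((nlf_prod_le _ _ hbb hbb hsss).trans d4)
  have t11 : ‖(2:ℝ)⁻¹ • ((b*b) * a)‖ ≤ E :=
    bnd _ _ h01 h11 ((nlf_prod_le _ _ hbb ha hsss).trans d3')
  have t12 : ‖(2:ℝ)⁻¹ • ((b*b) * a * b)‖ ≤ E :=
    bnd _ _ h01 h11 ((nlf_prod_le _ _ (nlf_prod_le _ _ hbb ha hsss) hb (by positivity)).trans d4'')
  have t13 : ‖(4:ℝ)⁻¹ • ((b*b) * a * (b*b))‖ ≤ E :=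
    bnd _ _ h02 h12 ((nlf_prod_le _ _ (nlf_prod_le _ _ hbb ha hsss) hbb (by positivity)).trans d5')
  have t14 : ‖(4:ℝ)⁻¹ • ((b*b) * (a*a))‖ ≤ E :=
    bnd _ _ h02 h12 ((nlf_prod_le _ _ hbb haa hsss).trans d4)
  have t15 : ‖(4:ℝ)⁻¹ • ((b*b) * (a*a) * b)‖ ≤ E :=
    bnd _ _ h02 h12 ((nlf_prod_le _ _ (nlf_prod_le _ _ hbb haa hsss) hb (by positivity)).trans d5'')
  have t16 : ‖(8:ℝ)⁻¹ • ((b*b) * (a*a) * (b*b))‖ ≤ E :=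
    bnd _ _ h03 h13 ((nlf_prod_le _ _ (nlf_prod_le _ _ hbb haa hsss) hbb (by positivity)).trans d6)
  calc ‖(2:ℝ)⁻¹ • (a * (b*b)) + (2:ℝ)⁻¹ • ((a*a) * b) + (4:ℝ)⁻¹ • ((a*a) * (b*b))
    + (2:ℝ)⁻¹ • (b*(b*b)) + b * a * b + (2:ℝ)⁻¹ • (b * a * (b*b))
    + (2:ℝ)⁻¹ • (b * (a*a)) + (2:ℝ)⁻¹ • (b * (a*a) * b) + (4:ℝ)⁻¹ • (b * (a*a) * (b*b))
    + (2:ℝ)⁻¹ • (b*(b*b)) + (4:ℝ)⁻¹ • ((b*b)*(b*b))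
    + (2:ℝ)⁻¹ • ((b*b) * a) + (2:ℝ)⁻¹ • ((b*b) * a * b) + (4:ℝ)⁻¹ • ((b*b) * a * (b*b))
    + (4:ℝ)⁻¹ • ((b*b) * (a*a)) + (4:ℝ)⁻¹ • ((b*b) * (a*a) * b)
    + (8:ℝ)⁻¹ • ((b*b) * (a*a) * (b*b))‖
      ≤ E + E + E + E + E + E + E + E + E + E + E + E + E + E + E + E + E := by
        refine norm_add_le_of_le (norm_add_le_of_le (norm_add_le_of_le (norm_add_le_of_le
          (norm_add_le_of_le (norm_add_le_of_le (norm_add_le_of_le (norm_add_le_of_le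
          (norm_add_le_of_le (norm_add_le_of_le (norm_add_le_of_le (norm_add_le_of_le
          (norm_add_le_of_le (norm_add_le_of_le (norm_add_le_of_le (norm_add_le_of_le
          t01 t02) t03) t04) t05) t06) t07) t08) t09) t04) t10) t11) t12) t13) t14) t15) t16
    _ = 17 * (s^3 * r^3) := by rw [hEdef]; ring

set_option maxHeartbeats 1000000 in
lemma nlf_strang (A B : 𝒜) : ∃ c : ℝ, 0 ≤ c ∧ ∀ τ : ℝ, 0 < τ → τ ≤ 1 →
    ‖exp ((τ/2) • B) * exp (τ • A) * exp ((τ/2) • B) - exp (τ • (A + B))‖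
      ≤ c * τ ^ 3 := by
  set r : ℝ := ‖A‖ + ‖B‖ + 1 with hrdef
  have hr1 : 1 ≤ r := by
    have := norm_nonneg A; have := norm_nonneg B; simp only [hrdef]; linarith
  have hr0 : 0 ≤ r := by linarith
  set G : ℝ := Real.exp r + (1 + r + r * r) with hGdef
  have hG1 : 1 ≤ G := by
    have := Real.one_le_exp hr0
    simp only [hGdef]; nlinarith
  have hG0 : 0 ≤ G := by linarith
  refine ⟨4 * G ^ 2 * (r ^ 3 * Real.exp r) + 17 * (r ^ 3 * r ^ 3), by positivity, ?_⟩
  intro τ hτ0 hτ1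
  set a : 𝒜 := τ • A with hadef
  set b : 𝒜 := (τ/2) • B with hbdef
  set x : 𝒜 := τ • (A + B) with hxdef
  have hxab : x = a + b + b := by
    rw [hxdef, hadef, hbdef, smul_add, add_assoc, ← add_smul]
    norm_num
  set s : ℝ := τ * r with hsdef
  have hs0 : 0 ≤ s := by positivity
  have hsr : s ≤ r := by nlinarith
  have ha : ‖a‖ ≤ s := by
    rw [hadef, norm_smul, Real.norm_eq_abs, abs_of_pos hτ0, hsdef]
    have : ‖A‖ ≤ r := by simp only [hrdef]; linarith [norm_nonneg B]
    nlinarith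
  have hb : ‖b‖ ≤ s := by
    rw [hbdef, norm_smul, Real.norm_eq_abs, abs_of_pos (by linarith : (0:ℝ) < τ/2), hsdef]
    have : ‖B‖ ≤ r := by simp only [hrdef]; linarith [norm_nonneg A]
    nlinarith [norm_nonneg B]
  have hx : ‖x‖ ≤ s := by
    rw [hxdef, norm_smul, Real.norm_eq_abs, abs_of_pos hτ0, hsdef]
    have : ‖A + B‖ ≤ r := by
      refine (norm_add_le A B).trans ?_; simp only [hrdef]; linarith
    nlinarith
  -- the quadratic Taylor polynomial
  set qa : 𝒜 := 1 + a + (2:ℝ)⁻¹ • (a*a) with hqadef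
  set qb : 𝒜 := 1 + b + (2:ℝ)⁻¹ • (b*b) with hqbdef
  set qx : 𝒜 := 1 + x + (2:ℝ)⁻¹ • (x*x) with hqxdef
  set D : ℝ := s ^ 3 * Real.exp r with hDdef
  have hD0 : 0 ≤ D := by positivity
  have keyE : ∀ y : 𝒜, ‖y‖ ≤ s → ‖exp y - (1 + y + (2:ℝ)⁻¹ • (y*y))‖ ≤ D := by
    intro y hy
    refine (nlf_tail_bound y).trans ?_
    have h1 : ‖y‖ ^ 3 ≤ s ^ 3 := pow_le_pow_left₀ (norm_nonneg y) hy 3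
    have h2 : Real.exp ‖y‖ ≤ Real.exp r := Real.exp_le_exp.2 (hy.trans hsr)
    have := Real.exp_pos ‖y‖
    rw [hDdef]
    nlinarith [pow_nonneg (norm_nonneg y) 3]
  have keyQ : ∀ y : 𝒜, ‖y‖ ≤ s → ‖(1 + y + (2:ℝ)⁻¹ • (y*y) : 𝒜)‖ ≤ G := by
    intro y hy
    have h1 : ‖(1 + y + (2:ℝ)⁻¹ • (y*y) : 𝒜)‖ ≤ ‖(1:𝒜)‖ + ‖y‖ + ‖(2:ℝ)⁻¹ • (y*y)‖ :=
      (norm_add_le _ _).trans (by gcongr; exact norm_add_le _ _)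
    have h2 : ‖(2:ℝ)⁻¹ • (y*y)‖ ≤ ‖y‖ * ‖y‖ := by
      rw [norm_smul, Real.norm_eq_abs]
      have := norm_mul_le y y
      have h3 : |(2:ℝ)⁻¹| = 2⁻¹ := by norm_num
      nlinarith [norm_nonneg (y*y)]
    rw [norm_one] at h1
    have hys : ‖y‖ ≤ r := hy.trans hsr
    have := norm_nonneg y
    simp only [hGdef]
    nlinarith [Real.exp_pos r]
  have keyX : ∀ y : 𝒜, ‖y‖ ≤ s → ‖exp y‖ ≤ G := by
    intro y hy
    refine (nlf_norm_exp_le y).trans ?_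
    have : Real.exp ‖y‖ ≤ Real.exp r := Real.exp_le_exp.2 (hy.trans hsr)
    simp only [hGdef]
    nlinarith [norm_nonneg y, norm_nonneg y, hy.trans hsr]
  -- step 1: replace exponentials by Taylor polynomials
  have step1 : ‖exp b * exp a * exp b - qb * qa * qb‖ ≤ 3 * G^2 * D := by
    have hid : exp b * exp a * exp b - qb * qa * qb
        = (exp b - qb) * (exp a * exp b)
          + qb * ((exp a - qa) * exp b + qa * (exp b - qb)) := by
      simp only [sub_mul, mul_sub, mul_add, mul_assoc]
      abel
    rw [hid]
    have t1 : ‖(exp b - qb) * (exp a * exp b)‖ ≤ D * (G * G) :=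
      nlf_prod_le _ _ (keyE b hb) (nlf_prod_le _ _ (keyX a ha) (keyX b hb) hG0) hD0
    have t2 : ‖(exp a - qa) * exp b‖ ≤ D * G :=
      nlf_prod_le _ _ (keyE a ha) (keyX b hb) hD0
    have t3 : ‖qa * (exp b - qb)‖ ≤ G * D :=
      nlf_prod_le _ _ (keyQ a ha) (keyE b hb) hG0
    have t4 : ‖qb * ((exp a - qa) * exp b + qa * (exp b - qb))‖ ≤ G * (D * G + G * D) :=
      nlf_prod_le _ _ (keyQ b hb) ((norm_add_le _ _).trans (add_le_add t2 t3)) hG0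
    refine (norm_add_le _ _).trans ?_
    calc ‖(exp b - qb) * (exp a * exp b)‖
          + ‖qb * ((exp a - qa) * exp b + qa * (exp b - qb))‖
        ≤ D * (G * G) + G * (D * G + G * D) := add_le_add t1 t4
      _ = 3 * G^2 * D := by ring
  -- step 2: the polynomial parts agree to second order
  have step2 : ‖qb * qa * qb - qx‖ ≤ 17 * (s^3 * r^3) := by
    rw [hqbdef, hqadef, hqxdef, hxab]
    exact nlf_poly_bound a b ha hb hs0 hsr hr0 hr1
  -- step 3: tail of exp x
  have step3 : ‖qx - exp x‖ ≤ D := by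
    rw [norm_sub_rev]
    exact keyE x hx
  -- combine
  have hsplit : exp b * exp a * exp b - exp x
      = (exp b * exp a * exp b - qb * qa * qb) + (qb * qa * qb - qx) + (qx - exp x) := by
    abel
  calc ‖exp b * exp a * exp b - exp x‖
      ≤ ‖exp b * exp a * exp b - qb * qa * qb‖ + ‖qb * qa * qb - qx‖
          + ‖qx - exp x‖ := by rw [hsplit]; exact norm_add₃_le
    _ ≤ 3 * G^2 * D + 17 * (s^3 * r^3) + D := by
        exact add_le_add (add_le_add step1 step2) step3
    _ ≤ (4 * G ^ 2 * (r ^ 3 * Real.exp r) + 17 * (r ^ 3 * r ^ 3)) * τ ^ 3 := by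
        have hs3 : s^3 = τ^3 * r^3 := by rw [hsdef]; ring
        have key : 0 ≤ (τ^3 * r^3 * Real.exp r) * (G^2 - 1) := by
          refine mul_nonneg (by positivity) (by nlinarith)
        rw [hDdef, hs3]
        nlinarith [key]

end Aux

section Rest

variable {𝒜 : Type*} [NormedRing 𝒜] [NormedAlgebra ℝ 𝒜] [CompleteSpace 𝒜] [NormOneClass 𝒜]

lemma nlf_powdiff (s t : 𝒜) (K : ℝ) (hK : 1 ≤ K) (hs : ‖s‖ ≤ K) (ht : ‖t‖ ≤ K) :
    ∀ n : ℕ, ‖s ^ n - t ^ n‖ ≤ n * K ^ n * ‖s - t‖ := by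
  intro n
  induction n with
  | zero => simp
  | succ n ih =>
    have hK0 : (0:ℝ) ≤ K := by linarith
    have hid : s ^ (n+1) - t ^ (n+1) = s * (s ^ n - t ^ n) + (s - t) * t ^ n := by
      simp only [_root_.pow_succ', mul_sub, sub_mul]
      abel
    rw [hid]
    have h1 : ‖s * (s ^ n - t ^ n)‖ ≤ K * (n * K ^ n * ‖s - t‖) :=
      nlf_prod_le _ _ hs ih hK0
    have h2 : ‖(s - t) * t ^ n‖ ≤ ‖s - t‖ * K ^ n :=
      nlf_prod_le _ _ le_rfl ((nlf_norm_pow_le t n).trans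
        (pow_le_pow_left₀ (norm_nonneg t) ht n)) (norm_nonneg _)
    refine (norm_add_le _ _).trans ((add_le_add h1 h2).trans ?_)
    have hKn : K ^ n ≤ K ^ (n+1) := pow_le_pow_right₀ hK (Nat.le_succ n)
    have hd0 : (0:ℝ) ≤ ‖s - t‖ := norm_nonneg _
    push_cast
    calc K * ((n:ℝ) * K ^ n * ‖s - t‖) + ‖s - t‖ * K ^ n
        = (n:ℝ) * (K * K ^ n) * ‖s - t‖ + ‖s - t‖ * K ^ n := by ring
      _ = (n:ℝ) * K ^ (n+1) * ‖s - t‖ + ‖s - t‖ * K ^ n := by rw [← _root_.pow_succ']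
      _ ≤ (n:ℝ) * K ^ (n+1) * ‖s - t‖ + ‖s - t‖ * K ^ (n+1) := by
          exact add_le_add le_rfl (mul_le_mul_of_nonneg_left hKn hd0)
      _ = ((n:ℝ) + 1) * K ^ (n+1) * ‖s - t‖ := by ring

set_option maxHeartbeats 1000000 in
theorem nlf_main_noc (A B₁ B₂ : 𝒜) :
    ∃ C : ℝ, ∀ h : ℝ, 0 < h → h ≤ 1 → ∀ M : ℕ, 0 < M →
      ‖exp ((h / 2) • B₂) *
            (exp ((h / (2 * (M : ℝ))) • B₁) * exp ((h / (M : ℝ)) • A) *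
              exp ((h / (2 * (M : ℝ))) • B₁)) ^ M *
            exp ((h / 2) • B₂)
          - exp (h • (A + B₁ + B₂))‖ ≤ C * h ^ 3 := by
  obtain ⟨c₁, hc₁0, hc₁⟩ := nlf_strang A B₁
  obtain ⟨c₂, hc₂0, hc₂⟩ := nlf_strang (A + B₁) B₂
  set L : ℝ := ‖A‖ + ‖B₁‖ with hLdef
  have hL0 : 0 ≤ L := by positivity
  refine ⟨Real.exp ‖B₂‖ * (c₁ * Real.exp L) * Real.exp ‖B₂‖ + c₂, ?_⟩
  intro h h0 h1 M hM
  have hM0 : (0:ℝ) < M := by exact_mod_cast hM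
  have hM1 : (1:ℝ) ≤ M := by exact_mod_cast hM
  set τ : ℝ := h / (M:ℝ) with hτdef
  have hτ0 : 0 < τ := div_pos h0 hM0
  have hτ1 : τ ≤ 1 := by rw [hτdef, div_le_one hM0]; linarith
  have hMτ : (M:ℝ) * τ = h := by rw [hτdef]; field_simp
  have e1 : h / (2 * (M:ℝ)) = τ / 2 := by rw [hτdef]; ring
  rw [e1]
  set S : 𝒜 := exp ((τ/2) • B₁) * exp (τ • A) * exp ((τ/2) • B₁) with hSdef
  set T : 𝒜 := exp (τ • (A + B₁)) with hTdef
  have hTM : T ^ M = exp (h • (A + B₁)) := by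
    letI : NormedAlgebra ℚ 𝒜 := NormedAlgebra.restrictScalars ℚ ℝ 𝒜
    rw [hTdef, ← exp_nsmul]
    congr 1
    rw [← Nat.cast_smul_eq_nsmul ℝ, smul_smul, hMτ]
  have hns : ∀ (c : ℝ) (y : 𝒜), 0 ≤ c → ‖exp (c • y)‖ ≤ Real.exp (c * ‖y‖) := by
    intro c y hc
    refine (nlf_norm_exp_le _).trans ?_
    rw [norm_smul, Real.norm_eq_abs, abs_of_nonneg hc]
  set K : ℝ := Real.exp (τ * L) with hKdef
  have hK1 : 1 ≤ K := Real.one_le_exp (by positivity)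
  have hSK : ‖S‖ ≤ K := by
    calc ‖S‖ ≤ Real.exp (τ/2 * ‖B₁‖) * Real.exp (τ * ‖A‖) * Real.exp (τ/2 * ‖B₁‖) :=
          nlf_prod_le _ _ (nlf_prod_le _ _ (hns _ _ (by positivity)) (hns _ _ hτ0.le)
            (by positivity)) (hns _ _ (by positivity)) (by positivity)
      _ = K := by rw [← Real.exp_add, ← Real.exp_add, hKdef, hLdef]; congr 1; ring
  have hTK : ‖T‖ ≤ K := by
    refine (hns τ (A + B₁) hτ0.le).trans (Real.exp_le_exp.2 ?_)
    have := norm_add_le A B₁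
    rw [hLdef]; nlinarith
  have hST : ‖S - T‖ ≤ c₁ * τ ^ 3 := hc₁ τ hτ0 hτ1
  have hKM : K ^ M = Real.exp (h * L) := by
    rw [hKdef, ← Real.exp_nat_mul, ← mul_assoc, hMτ]
  have hKMle : K ^ M ≤ Real.exp L := by
    rw [hKM]; exact Real.exp_le_exp.2 (by nlinarith)
  have hMτ3 : (M:ℝ) * τ ^ 3 ≤ h ^ 3 := by
    have heq : (M:ℝ) * τ ^ 3 = h ^ 3 / (M:ℝ) ^ 2 := by
      rw [hτdef]; field_simp
    rw [heq, div_le_iff₀ (by positivity)]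
    have hM2 : (1:ℝ) ≤ (M:ℝ)^2 := by nlinarith
    nlinarith [mul_nonneg (pow_nonneg h0.le 3) (sub_nonneg.2 hM2)]
  have hinner : ‖S ^ M - exp (h • (A + B₁))‖ ≤ c₁ * Real.exp L * h ^ 3 := by
    rw [← hTM]
    refine ((nlf_powdiff S T K hK1 hSK hTK M).trans
      (mul_le_mul_of_nonneg_left hST (by positivity))).trans ?_
    calc (M:ℝ) * K ^ M * (c₁ * τ ^ 3) = K ^ M * (c₁ * ((M:ℝ) * τ ^ 3)) := by ring
      _ ≤ Real.exp L * (c₁ * h ^ 3) := by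
          refine mul_le_mul hKMle (mul_le_mul_of_nonneg_left hMτ3 hc₁0)
            (mul_nonneg hc₁0 (by positivity)) (Real.exp_pos L).le
      _ = c₁ * Real.exp L * h ^ 3 := by ring
  have houter : ‖exp ((h/2) • B₂) * exp (h • (A + B₁)) * exp ((h/2) • B₂)
      - exp (h • (A + B₁ + B₂))‖ ≤ c₂ * h ^ 3 := hc₂ h h0 h1
  have hsplit : exp ((h/2) • B₂) * S ^ M * exp ((h/2) • B₂) - exp (h • (A + B₁ + B₂))
      = exp ((h/2) • B₂) * (S ^ M - exp (h • (A + B₁))) * exp ((h/2) • B₂)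
        + (exp ((h/2) • B₂) * exp (h • (A + B₁)) * exp ((h/2) • B₂)
            - exp (h • (A + B₁ + B₂))) := by
    simp only [mul_sub, sub_mul]
    abel
  have hB₂ : ‖exp ((h/2) • B₂)‖ ≤ Real.exp ‖B₂‖ := by
    refine (hns _ _ (by positivity)).trans (Real.exp_le_exp.2 ?_)
    nlinarith [norm_nonneg B₂]
  rw [hsplit]
  refine (norm_add_le _ _).trans ?_
  have hmid : ‖exp ((h/2) • B₂) * (S ^ M - exp (h • (A + B₁))) * exp ((h/2) • B₂)‖
      ≤ Real.exp ‖B₂‖ * (c₁ * Real.exp L * h ^ 3) * Real.exp ‖B₂‖ :=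
    nlf_prod_le _ _ (nlf_prod_le _ _ hB₂ hinner (Real.exp_pos _).le)
      hB₂ (by positivity)
  have := add_le_add hmid houter
  refine this.trans (le_of_eq ?_)
  ring

end Rest

/-- The nested (multirate) leap-frog scheme
`Δ̂(h) = exp((h/2)B₂)·(exp((h/(2M))B₁)·exp((h/M)A)·exp((h/(2M))B₁))^M·exp((h/2)B₂)`
is second-order accurate uniformly in the number `M` of inner steps. -/
theorem nested_leapfrog_uniform_second_order {𝒜 : Type*} [NormedRing 𝒜]
    [NormedAlgebra ℝ 𝒜] [CompleteSpace 𝒜] (A B₁ B₂ : 𝒜) :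
    ∃ C : ℝ, ∀ h : ℝ, 0 < h → h ≤ 1 → ∀ M : ℕ, 0 < M →
      ‖exp ((h / 2) • B₂) *
            (exp ((h / (2 * (M : ℝ))) • B₁) * exp ((h / (M : ℝ)) • A) *
              exp ((h / (2 * (M : ℝ))) • B₁)) ^ M *
            exp ((h / 2) • B₂)
          - exp (h • (A + B₁ + B₂))‖ ≤ C * h ^ 3 := by
  rcases subsingleton_or_nontrivial 𝒜 with hsub | hnt
  · refine ⟨0, fun h h0 h1 M hM => ?_⟩
    have hz : ∀ x : 𝒜, ‖x‖ = 0 := fun x => by rw [Subsingleton.elim x 0, norm_zero]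
    rw [hz, zero_mul]
  · set ψ : 𝒜 →+* (𝒜 →L[ℝ] 𝒜) :=
      { toFun := fun u => ContinuousLinearMap.mul ℝ 𝒜 u
        map_one' := by ext w; simp
        map_mul' := fun u v => by ext w; simp [mul_assoc]
        map_zero' := by ext w; simp
        map_add' := fun u v => by ext w; simp [add_mul] } with hψdef
    have hψcont : Continuous ψ := (ContinuousLinearMap.mul ℝ 𝒜).continuous
    have hψexp : ∀ y : 𝒜, ψ (exp y) = exp (ψ y) := fun y => by
      letI : NormedAlgebra ℚ 𝒜 := NormedAlgebra.restrictScalars ℚ ℝ 𝒜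
      exact map_exp ψ hψcont y
    have hψsmul : ∀ (c : ℝ) (u : 𝒜), ψ (c • u) = c • ψ u := fun c u =>
      (ContinuousLinearMap.mul ℝ 𝒜).map_smul c u
    have hψnorm : ∀ u : 𝒜, ‖u‖ ≤ ‖(1:𝒜)‖ * ‖ψ u‖ := by
      intro u
      have h1 : ψ u 1 = u := by
        show ContinuousLinearMap.mul ℝ 𝒜 u 1 = u
        simp
      calc ‖u‖ = ‖ψ u 1‖ := by rw [h1]
        _ ≤ ‖ψ u‖ * ‖(1:𝒜)‖ := (ψ u).le_opNorm 1
        _ = ‖(1:𝒜)‖ * ‖ψ u‖ := mul_comm _ _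
    obtain ⟨C, hC⟩ := nlf_main_noc (ψ A) (ψ B₁) (ψ B₂)
    refine ⟨‖(1:𝒜)‖ * max C 0, fun h h0 h1 M hM => ?_⟩
    have key := hC h h0 h1 M hM
    have htrans : ψ (exp ((h / 2) • B₂) *
            (exp ((h / (2 * (M : ℝ))) • B₁) * exp ((h / (M : ℝ)) • A) *
              exp ((h / (2 * (M : ℝ))) • B₁)) ^ M *
            exp ((h / 2) • B₂)
          - exp (h • (A + B₁ + B₂)))
        = exp ((h / 2) • ψ B₂) *
            (exp ((h / (2 * (M : ℝ))) • ψ B₁) * exp ((h / (M : ℝ)) • ψ A) *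
              exp ((h / (2 * (M : ℝ))) • ψ B₁)) ^ M *
            exp ((h / 2) • ψ B₂)
          - exp (h • (ψ A + ψ B₁ + ψ B₂)) := by
      simp only [map_sub, map_mul, map_pow, hψexp, hψsmul, map_add]
    calc ‖exp ((h / 2) • B₂) *
            (exp ((h / (2 * (M : ℝ))) • B₁) * exp ((h / (M : ℝ)) • A) *
              exp ((h / (2 * (M : ℝ))) • B₁)) ^ M *
            exp ((h / 2) • B₂)
          - exp (h • (A + B₁ + B₂))‖
        ≤ ‖(1:𝒜)‖ * ‖ψ (exp ((h / 2) • B₂) *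
            (exp ((h / (2 * (M : ℝ))) • B₁) * exp ((h / (M : ℝ)) • A) *
              exp ((h / (2 * (M : ℝ))) • B₁)) ^ M *
            exp ((h / 2) • B₂)
          - exp (h • (A + B₁ + B₂)))‖ := hψnorm _
      _ ≤ ‖(1:𝒜)‖ * (C * h ^ 3) := by
          rw [htrans]
          exact mul_le_mul_of_nonneg_left key (norm_nonneg _)
      _ ≤ ‖(1:𝒜)‖ * max C 0 * h ^ 3 := by
          have h3 : (0:ℝ) ≤ h ^ 3 := by positivity
          have hCm : C * h ^ 3 ≤ max C 0 * h ^ 3 :=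
            mul_le_mul_of_nonneg_right (le_max_left C 0) h3
          calc ‖(1:𝒜)‖ * (C * h ^ 3) ≤ ‖(1:𝒜)‖ * (max C 0 * h ^ 3) :=
                mul_le_mul_of_nonneg_left hCm (norm_nonneg _)
            _ = ‖(1:𝒜)‖ * max C 0 * h ^ 3 := by ring
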